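/- Let 𝒯 be the surface uv = −∏_{i=1}^{g+1}(z−λᵢ)(z−λ′ᵢ) (a conic bundle over ℙ¹ away from two points) with real structure σ(z,u,v) = (z̄, v̄, ū), where λ₁ < λ′₁ < ⋯ < λ_{g+1} < λ′_{g+1} are real. Then the real locus 𝒯^σ consists of exactly g+1 connected components, each diffeomorphic to a 2-sphere, the i-th lying over the interval [λᵢ, λ′ᵢ] ⊂ ℝP¹; moreover 𝒯^σ avoids the two singular points of 𝒯. -/

import Mathlib

open Real Set Filter Topology

noncomputable section

namespace Stmt15

def hmap (a b t : ℝ) : ℝ := (a + b) / 2 + t * ((b - a) / 2)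

def SS (a b : ℝ) (f : ℝ → ℝ) : Set (ℝ × ℂ) :=
  {p | Complex.normSq p.2 = f p.1 ∧ p.1 ∈ Set.Icc a b}

def pmap (a b : ℝ) (f : ℝ → ℝ) (x : EuclideanSpace ℝ (Fin 3)) : ℝ × ℂ :=
  (hmap a b (x 0),
    ((x 1 : ℂ) + (x 2 : ℂ) * Complex.I) *
      ((Real.sqrt (f (hmap a b (x 0)) / (1 - (x 0) ^ 2)) : ℝ) : ℂ))

lemma nsq (r s : ℝ) : Complex.normSq ((r : ℂ) + (s : ℂ) * Complex.I) = r ^ 2 + s ^ 2 := by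
  simp [Complex.normSq_apply]; ring

lemma mem_sph (x : EuclideanSpace ℝ (Fin 3)) :
    x ∈ Metric.sphere (0 : EuclideanSpace ℝ (Fin 3)) 1 ↔
      (x 0) ^ 2 + (x 1) ^ 2 + (x 2) ^ 2 = 1 := by
  rw [mem_sphere_zero_iff_norm, EuclideanSpace.norm_eq, Fin.sum_univ_three]
  rw [Real.sqrt_eq_one]
  simp [Real.norm_eq_abs, sq_abs]

lemma eeq (x y : EuclideanSpace ℝ (Fin 3)) (h0 : x 0 = y 0) (h1 : x 1 = y 1)
    (h2 : x 2 = y 2) : x = y := by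
  ext i
  fin_cases i <;> assumption

lemma hmap_mem_Ioo {a b : ℝ} (hab : a < b) {t : ℝ} (h1 : -1 < t) (h2 : t < 1) :
    hmap a b t ∈ Set.Ioo a b := by
  unfold hmap; constructor <;> nlinarith

lemma hmap_neg_one (a b : ℝ) : hmap a b (-1) = a := by unfold hmap; ring
lemma hmap_one (a b : ℝ) : hmap a b 1 = b := by unfold hmap; ring

variable {a b : ℝ} {f : ℝ → ℝ}

section

variable (hab : a < b) (ha : f a = 0) (hb : f b = 0)

include hab ha hb in
/-- key norm identity on the sphere -/
lemma key (x : EuclideanSpace ℝ (Fin 3))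
    (hx : x ∈ Metric.sphere (0 : EuclideanSpace ℝ (Fin 3)) 1) :
    ‖(pmap a b f x).2‖ = Real.sqrt (f (hmap a b (x 0))) := by
  rw [mem_sph] at hx
  have h1 : (x 0) ^ 2 ≤ 1 := by nlinarith [sq_nonneg (x 1), sq_nonneg (x 2)]
  show ‖((x 1 : ℂ) + (x 2 : ℂ) * Complex.I) * _‖ = _
  rw [norm_mul, Complex.norm_real, Complex.norm_def, nsq,
    Real.norm_eq_abs, abs_of_nonneg (Real.sqrt_nonneg _)]
  have h2 : (x 1) ^ 2 + (x 2) ^ 2 = 1 - (x 0) ^ 2 := by linarith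
  rw [h2, ← Real.sqrt_mul (by linarith)]
  rcases eq_or_lt_of_le h1 with heq | hlt
  · -- pole : both sides are √0
    have hx0 : (x 0 - 1) * (x 0 + 1) = 0 := by nlinarith
    have hz : f (hmap a b (x 0)) = 0 := by
      rcases mul_eq_zero.mp hx0 with h | h
      · have : x 0 = 1 := by linarith
        rw [this, hmap_one]; exact hb
      · have : x 0 = -1 := by linarith
        rw [this, hmap_neg_one]; exact ha
    have h10 : 1 - (x 0) ^ 2 = 0 := by linarith
    rw [hz, h10]; simp
  · rw [mul_div_cancel₀ _ (by linarith : 1 - (x 0) ^ 2 ≠ 0)]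

include hab ha hb in
lemma pmap_mem (hpos : ∀ z ∈ Set.Ioo a b, 0 < f z) (x : EuclideanSpace ℝ (Fin 3))
    (hx : x ∈ Metric.sphere (0 : EuclideanSpace ℝ (Fin 3)) 1) :
    pmap a b f x ∈ SS a b f := by
  rw [mem_sph] at hx
  have h1 : (x 0) ^ 2 ≤ 1 := by nlinarith [sq_nonneg (x 1), sq_nonneg (x 2)]
  have htl : -1 ≤ x 0 := by nlinarith
  have htu : x 0 ≤ 1 := by nlinarith
  have hzm : hmap a b (x 0) ∈ Set.Icc a b := by
    unfold hmap; constructor <;> nlinarith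
  refine ⟨?_, hzm⟩
  have hp1 : (pmap a b f x).1 = hmap a b (x 0) := rfl
  rw [hp1]
  show Complex.normSq (((x 1 : ℂ) + (x 2 : ℂ) * Complex.I) * _) = _
  rw [Complex.normSq_mul, nsq, Complex.normSq_ofReal]
  rcases eq_or_lt_of_le h1 with heq | hlt
  · -- pole
    have h12 : (x 1) ^ 2 + (x 2) ^ 2 = 0 := by linarith
    have hz : f (hmap a b (x 0)) = 0 := by
      have hx0 : (x 0 - 1) * (x 0 + 1) = 0 := by nlinarith
      rcases mul_eq_zero.mp hx0 with h | h
      · have : x 0 = 1 := by linarith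
        rw [this, hmap_one]; exact hb
      · have : x 0 = -1 := by linarith
        rw [this, hmap_neg_one]; exact ha
    rw [h12, hz, zero_mul]
  · -- interior
    have hint : hmap a b (x 0) ∈ Set.Ioo a b := by
      unfold hmap; constructor <;> nlinarith
    have hfz : 0 < f (hmap a b (x 0)) := hpos _ hint
    have hs : Real.sqrt (f (hmap a b (x 0)) / (1 - (x 0) ^ 2)) *
        Real.sqrt (f (hmap a b (x 0)) / (1 - (x 0) ^ 2)) =
        f (hmap a b (x 0)) / (1 - (x 0) ^ 2) := by
      have h3 : (0:ℝ) < 1 - (x 0) ^ 2 := by linarith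
      exact Real.mul_self_sqrt (by positivity)
    rw [hs]
    have h2 : (x 1) ^ 2 + (x 2) ^ 2 = 1 - (x 0) ^ 2 := by linarith
    rw [h2]
    have h3 : (0:ℝ) < 1 - (x 0) ^ 2 := by linarith
    rw [mul_comm, div_mul_cancel₀ _ (ne_of_gt h3)]

include hab ha hb in
lemma pmap_surj (hpos : ∀ z ∈ Set.Ioo a b, 0 < f z) (p : ℝ × ℂ) (hp : p ∈ SS a b f) :
    ∃ x ∈ Metric.sphere (0 : EuclideanSpace ℝ (Fin 3)) 1, pmap a b f x = p := by
  obtain ⟨hn, hz1, hz2⟩ := hp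
  rcases eq_or_lt_of_le hz1 with hza | hza
  · -- p.1 = a
    have hu : p.2 = 0 := by
      rw [← Complex.normSq_eq_zero, hn, ← hza, ha]
    refine ⟨(WithLp.toLp 2 (![-1, 0, 0] : Fin 3 → ℝ)), ?_, ?_⟩
    · rw [mem_sph]; norm_num; rfl
    · have h0 : (WithLp.toLp 2 (![-1, 0, 0] : Fin 3 → ℝ)) 0 = -1 := rfl
      unfold pmap
      rw [h0, hmap_neg_one]
      have h1 : (WithLp.toLp 2 (![-1, 0, 0] : Fin 3 → ℝ)) 1 = 0 := rfl
      have h2 : (WithLp.toLp 2 (![-1, 0, 0] : Fin 3 → ℝ)) 2 = 0 := rfl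
      rw [h1, h2]
      have hsimp : (((0:ℝ):ℂ) + ((0:ℝ):ℂ) * Complex.I) = 0 := by simp
      rw [hsimp, zero_mul]
      exact Prod.ext_iff.mpr ⟨hza, hu.symm⟩
  rcases eq_or_lt_of_le hz2 with hzb | hzb
  · -- p.1 = b
    have hu : p.2 = 0 := by
      rw [← Complex.normSq_eq_zero, hn, hzb, hb]
    refine ⟨(WithLp.toLp 2 (![1, 0, 0] : Fin 3 → ℝ)), ?_, ?_⟩
    · rw [mem_sph]; norm_num; rfl
    · have h0 : (WithLp.toLp 2 (![1, 0, 0] : Fin 3 → ℝ)) 0 = 1 := rfl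
      unfold pmap
      rw [h0, hmap_one]
      have h1 : (WithLp.toLp 2 (![1, 0, 0] : Fin 3 → ℝ)) 1 = 0 := rfl
      have h2 : (WithLp.toLp 2 (![1, 0, 0] : Fin 3 → ℝ)) 2 = 0 := rfl
      rw [h1, h2]
      have hsimp : (((0:ℝ):ℂ) + ((0:ℝ):ℂ) * Complex.I) = 0 := by simp
      rw [hsimp, zero_mul]
      exact Prod.ext_iff.mpr ⟨hzb.symm, hu.symm⟩
  · -- interior
    set z := p.1 with hzdef
    have hfz : 0 < f z := hpos _ ⟨hza, hzb⟩
    set t : ℝ := (2 * z - (a + b)) / (b - a) with htdef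
    have hba : (0:ℝ) < b - a := by linarith
    have hzt : hmap a b t = z := by
      unfold hmap; rw [htdef]; field_simp; ring
    have ht1 : -1 < t := by
      rw [htdef, lt_div_iff₀ hba]; linarith
    have ht2 : t < 1 := by
      rw [htdef, div_lt_one hba]; linarith
    have h1t : (0:ℝ) < 1 - t ^ 2 := by nlinarith
    set d : ℝ := Real.sqrt ((1 - t ^ 2) / f z) with hddef
    set w : ℂ := p.2 * (d : ℂ) with hwdef
    have hnw : Complex.normSq w = 1 - t ^ 2 := by
      rw [hwdef, Complex.normSq_mul, Complex.normSq_ofReal, hn,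
        Real.mul_self_sqrt (by positivity)]
      field_simp
    refine ⟨(WithLp.toLp 2 (![t, w.re, w.im] : Fin 3 → ℝ)), ?_, ?_⟩
    · rw [mem_sph]
      have h0 : (WithLp.toLp 2 (![t, w.re, w.im] : Fin 3 → ℝ)) 0 = t := rfl
      have h1 : (WithLp.toLp 2 (![t, w.re, w.im] : Fin 3 → ℝ)) 1 = w.re := rfl
      have h2 : (WithLp.toLp 2 (![t, w.re, w.im] : Fin 3 → ℝ)) 2 = w.im := rfl
      rw [h0, h1, h2]
      have := hnw
      rw [Complex.normSq_apply] at this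
      nlinarith [this]
    · have h0 : (WithLp.toLp 2 (![t, w.re, w.im] : Fin 3 → ℝ)) 0 = t := rfl
      have h1 : (WithLp.toLp 2 (![t, w.re, w.im] : Fin 3 → ℝ)) 1 = w.re := rfl
      have h2 : (WithLp.toLp 2 (![t, w.re, w.im] : Fin 3 → ℝ)) 2 = w.im := rfl
      unfold pmap
      rw [h0, h1, h2, hzt, Complex.re_add_im]
      rw [hwdef]
      ext
      · simp [hzt]; exact hzdef
      · show (p.2 * (d:ℂ) * ((Real.sqrt (f z / (1 - t^2)) : ℝ) : ℂ)) = p.2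
        rw [mul_assoc, ← Complex.ofReal_mul, hddef,
          ← Real.sqrt_mul (by positivity)]
        have : (1 - t ^ 2) / f z * (f z / (1 - t ^ 2)) = 1 := by
          field_simp
        rw [this, Real.sqrt_one]
        simp

include hab ha hb in
lemma pmap_inj (hpos : ∀ z ∈ Set.Ioo a b, 0 < f z) :
    Set.InjOn (pmap a b f) (Metric.sphere (0 : EuclideanSpace ℝ (Fin 3)) 1) := by
  intro x hx y hy hxy
  rw [mem_sph] at hx hy
  have h1 : (x 0) ^ 2 ≤ 1 := by nlinarith [sq_nonneg (x 1), sq_nonneg (x 2)]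
  obtain ⟨he1, he2⟩ := Prod.ext_iff.mp hxy
  have ht : x 0 = y 0 := by
    have : hmap a b (x 0) = hmap a b (y 0) := he1
    unfold hmap at this
    have h2 : (x 0 - y 0) * ((b - a) / 2) = 0 := by linarith
    rcases mul_eq_zero.mp h2 with h | h
    · linarith
    · exfalso; have : b - a > 0 := by linarith
      linarith
  rcases eq_or_lt_of_le h1 with heq | hlt
  · -- pole: all tangential coords vanish
    have hx12 : (x 1) ^ 2 + (x 2) ^ 2 = 0 := by linarith
    have hy12 : (y 1) ^ 2 + (y 2) ^ 2 = 0 := by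
      rw [← ht] at hy; linarith
    have hx1 : x 1 = 0 := by nlinarith [sq_nonneg (x 1), sq_nonneg (x 2)]
    have hx2 : x 2 = 0 := by nlinarith [sq_nonneg (x 1), sq_nonneg (x 2)]
    have hy1 : y 1 = 0 := by nlinarith [sq_nonneg (y 1), sq_nonneg (y 2)]
    have hy2 : y 2 = 0 := by nlinarith [sq_nonneg (y 1), sq_nonneg (y 2)]
    exact eeq x y ht (by rw [hx1, hy1]) (by rw [hx2, hy2])
  · -- interior: the scaling factor is positive
    have hl : -1 < x 0 := by nlinarith [sq_nonneg (x 0 + 1)]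
    have hu : x 0 < 1 := by nlinarith [sq_nonneg (x 0 - 1)]
    have h1t : (0:ℝ) < 1 - (x 0) ^ 2 := by nlinarith
    have hint : hmap a b (x 0) ∈ Set.Ioo a b := hmap_mem_Ioo hab hl hu
    have hfz : 0 < f (hmap a b (x 0)) := hpos _ hint
    set c : ℝ := Real.sqrt (f (hmap a b (x 0)) / (1 - (x 0) ^ 2)) with hcdef
    have hc : 0 < c := Real.sqrt_pos.mpr (by positivity)
    have he2' : ((x 1 : ℂ) + (x 2 : ℂ) * Complex.I) * (c : ℂ) =
        ((y 1 : ℂ) + (y 2 : ℂ) * Complex.I) * (c : ℂ) := by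
      have : (pmap a b f x).2 = (pmap a b f y).2 := he2
      unfold pmap at this
      rw [← ht] at this
      exact this
    have hcne : (c : ℂ) ≠ 0 := by
      simp [Complex.ofReal_ne_zero]; linarith
    have hq : ((x 1 : ℂ) + (x 2 : ℂ) * Complex.I) =
        ((y 1 : ℂ) + (y 2 : ℂ) * Complex.I) := mul_right_cancel₀ hcne he2'
    have h1' : x 1 = y 1 := by
      have := congrArg Complex.re hq; simpa using this
    have h2' : x 2 = y 2 := by
      have := congrArg Complex.im hq; simpa using this
    exact eeq x y ht h1' h2'

include hab ha hb in
lemma pmap_cont (hf : Continuous f) :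
    ContinuousOn (pmap a b f) (Metric.sphere (0 : EuclideanSpace ℝ (Fin 3)) 1) := by
  have hc0 : Continuous fun x : EuclideanSpace ℝ (Fin 3) => x 0 :=
    (EuclideanSpace.proj (0 : Fin 3)).continuous
  have hc1 : Continuous fun x : EuclideanSpace ℝ (Fin 3) => x 1 :=
    (EuclideanSpace.proj (1 : Fin 3)).continuous
  have hc2 : Continuous fun x : EuclideanSpace ℝ (Fin 3) => x 2 :=
    (EuclideanSpace.proj (2 : Fin 3)).continuous
  have hcz : Continuous fun x : EuclideanSpace ℝ (Fin 3) => hmap a b (x 0) := by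
    unfold hmap
    exact continuous_const.add (hc0.mul continuous_const)
  have hcq : Continuous fun x : EuclideanSpace ℝ (Fin 3) =>
      ((x 1 : ℂ) + (x 2 : ℂ) * Complex.I) :=
    ((Complex.continuous_ofReal.comp hc1).add
      ((Complex.continuous_ofReal.comp hc2).mul continuous_const))
  apply ContinuousOn.prodMk hcz.continuousOn
  intro x hx
  by_cases hx0 : (x 0) ^ 2 = 1
  · -- pole point
    have hq0 : ((x 1 : ℂ) + (x 2 : ℂ) * Complex.I) = 0 := by
      rw [mem_sph] at hx
      have h1 : x 1 = 0 := by nlinarith [sq_nonneg (x 1), sq_nonneg (x 2)]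
      have h2 : x 2 = 0 := by nlinarith [sq_nonneg (x 1), sq_nonneg (x 2)]
      rw [h1, h2]; simp
    have hfz : f (hmap a b (x 0)) = 0 := by
      have hx01 : (x 0 - 1) * (x 0 + 1) = 0 := by nlinarith
      rcases mul_eq_zero.mp hx01 with h | h
      · have : x 0 = 1 := by linarith
        rw [this, hmap_one]; exact hb
      · have : x 0 = -1 := by linarith
        rw [this, hmap_neg_one]; exact ha
    have hval : ((x 1 : ℂ) + (x 2 : ℂ) * Complex.I) *
        ((Real.sqrt (f (hmap a b (x 0)) / (1 - (x 0) ^ 2)) : ℝ) : ℂ) = 0 := by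
      rw [hq0, zero_mul]
    have T0 : Filter.Tendsto (fun y : EuclideanSpace ℝ (Fin 3) =>
        ((y 1 : ℂ) + (y 2 : ℂ) * Complex.I) *
          ((Real.sqrt (f (hmap a b (y 0)) / (1 - (y 0) ^ 2)) : ℝ) : ℂ))
        (nhdsWithin x (Metric.sphere (0 : EuclideanSpace ℝ (Fin 3)) 1))
        (nhds 0) := ?_
    · unfold ContinuousWithinAt
      convert T0 using 2
    rw [tendsto_zero_iff_norm_tendsto_zero]
    have hev : (fun y : EuclideanSpace ℝ (Fin 3) => Real.sqrt (f (hmap a b (y 0))))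
        =ᶠ[nhdsWithin x (Metric.sphere (0 : EuclideanSpace ℝ (Fin 3)) 1)]
        fun y => ‖((y 1 : ℂ) + (y 2 : ℂ) * Complex.I) *
          ((Real.sqrt (f (hmap a b (y 0)) / (1 - (y 0) ^ 2)) : ℝ) : ℂ)‖ := by
      filter_upwards [self_mem_nhdsWithin] with y hy
      exact (key hab ha hb y hy).symm
    apply Filter.Tendsto.congr' hev
    have hlim : Filter.Tendsto (fun y : EuclideanSpace ℝ (Fin 3) =>
        Real.sqrt (f (hmap a b (y 0))))
        (nhdsWithin x (Metric.sphere (0 : EuclideanSpace ℝ (Fin 3)) 1))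
        (nhds (Real.sqrt (f (hmap a b (x 0))))) :=
      ((Real.continuous_sqrt.comp (hf.comp hcz)).tendsto x).mono_left nhdsWithin_le_nhds
    rw [hfz, Real.sqrt_zero] at hlim
    exact hlim
  · -- non-pole point: everything is continuous at x
    apply ContinuousAt.continuousWithinAt
    apply ContinuousAt.mul hcq.continuousAt
    apply Complex.continuous_ofReal.continuousAt.comp
    apply (Real.continuous_sqrt.continuousAt).comp
    apply ContinuousAt.div ((hf.comp hcz).continuousAt)
      ((continuous_const.sub (hc0.pow 2)).continuousAt)
    intro h
    apply hx0
    have : (1:ℝ) - (x 0) ^ 2 = 0 := h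
    linarith

include hab ha hb in
theorem main (hf : Continuous f) (hpos : ∀ z ∈ Set.Ioo a b, 0 < f z) :
    Nonempty (↥(SS a b f) ≃ₜ Metric.sphere (0 : EuclideanSpace ℝ (Fin 3)) 1) ∧
    IsCompact (SS a b f) ∧ IsConnected (SS a b f) := by
  have himg : pmap a b f '' (Metric.sphere (0 : EuclideanSpace ℝ (Fin 3)) 1) = SS a b f := by
    apply Set.Subset.antisymm
    · rintro _ ⟨x, hx, rfl⟩
      exact pmap_mem hab ha hb hpos x hx
    · intro p hp
      obtain ⟨x, hx, hxe⟩ := pmap_surj hab ha hb hpos p hp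
      exact ⟨x, hx, hxe⟩
  have hcont := pmap_cont hab ha hb hf
  have hsphcon : IsConnected (Metric.sphere (0 : EuclideanSpace ℝ (Fin 3)) 1) := by
    apply isConnected_sphere ?_ 0 (zero_le_one)
    have h : Module.finrank ℝ (EuclideanSpace ℝ (Fin 3)) = 3 := finrank_euclideanSpace_fin
    have h2 := Module.finrank_eq_rank ℝ (EuclideanSpace ℝ (Fin 3))
    rw [h] at h2
    rw [← h2]
    norm_num
  refine ⟨?_, ?_, ?_⟩
  · -- homeomorphism
    have hmem : ∀ x : Metric.sphere (0 : EuclideanSpace ℝ (Fin 3)) 1,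
        pmap a b f x ∈ SS a b f := fun x => himg ▸ Set.mem_image_of_mem _ x.2
    let F : Metric.sphere (0 : EuclideanSpace ℝ (Fin 3)) 1 → ↥(SS a b f) :=
      fun x => ⟨pmap a b f x, hmem x⟩
    have hFc : Continuous F :=
      Continuous.subtype_mk
        (hcont.comp_continuous continuous_subtype_val fun x => x.2) _
    have hFbij : Function.Bijective F := by
      constructor
      · intro x y hxy
        exact Subtype.ext
          (pmap_inj hab ha hb hpos x.2 y.2 (congrArg Subtype.val hxy))
      · rintro ⟨p, hp⟩
        have : p ∈ pmap a b f '' _ := himg ▸ hp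
        obtain ⟨x, hx, hxe⟩ := this
        exact ⟨⟨x, hx⟩, Subtype.ext hxe⟩
    exact ⟨(Continuous.homeoOfEquivCompactToT2 (f := Equiv.ofBijective F hFbij) hFc).symm⟩
  · rw [← himg]
    exact (isCompact_sphere _ _).image_of_continuousOn hcont
  · rw [← himg]
    exact hsphcon.image _ hcont

end

end Stmt15

end


/-- The real locus of the surface `uv = −∏ᵢ (z−λᵢ)(z−λ′ᵢ)` with respect to the real
structure `σ(z,u,v) = (z̄, v̄, ū)`: the fixed points are `z ∈ ℝ`, `v = ū`,
`|u|² = −∏ᵢ (z−λᵢ)(z−λ′ᵢ)`, so the real locus is identified with the following subset of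
`ℝ × ℂ` (the two singular points of `𝒯` lie over the vertex at infinity, so the real
locus is contained in the affine part). -/
def TRealLocus (g : ℕ) (lam lam' : Fin (g + 1) → ℝ) : Set (ℝ × ℂ) :=
  {p | Complex.normSq p.2 = -∏ i : Fin (g + 1), ((p.1 - lam i) * (p.1 - lam' i))}

/-- The part of the real locus lying over the closed interval `[λᵢ, λ′ᵢ] ⊂ ℝP¹`. -/
def TRealSphere (g : ℕ) (lam lam' : Fin (g + 1) → ℝ) (i : Fin (g + 1)) : Set (ℝ × ℂ) :=
  {p ∈ TRealLocus g lam lam' | p.1 ∈ Set.Icc (lam i) (lam' i)}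

/-- Let `𝒯` be the surface `uv = −∏_{i=1}^{g+1}(z−λᵢ)(z−λ′ᵢ)` (a conic
bundle over `ℙ¹` away from two points) with real structure `σ(z,u,v) = (z̄, v̄, ū)`, where
`λ₁ < λ′₁ < ⋯ < λ_{g+1} < λ′_{g+1}` are real.  Then the real locus `𝒯^σ` consists of
exactly `g+1` connected components, each homeomorphic to a 2-sphere, the `i`-th lying
over the interval `[λᵢ, λ′ᵢ] ⊂ ℝP¹`; moreover `𝒯^σ` is compact, hence avoids the two
singular points of `𝒯` (which lie over the vertex at infinity). -/
theorem statement_15 (g : ℕ) (lam lam' : Fin (g + 1) → ℝ)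
    (hord1 : ∀ i, lam i < lam' i)
    (hord2 : ∀ i j : Fin (g + 1), i < j → lam' i < lam j) :
    (TRealLocus g lam lam' = ⋃ i, TRealSphere g lam lam' i) ∧
    (∀ i j, i ≠ j →
      Disjoint (TRealSphere g lam lam' i) (TRealSphere g lam lam' j)) ∧
    (∀ i, (TRealSphere g lam lam' i).Nonempty) ∧
    (∀ i, ∀ p ∈ TRealSphere g lam lam' i,
      connectedComponentIn (TRealLocus g lam lam') p = TRealSphere g lam lam' i) ∧
    (∀ i, Nonempty (↥(TRealSphere g lam lam' i) ≃ₜ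
      Metric.sphere (0 : EuclideanSpace ℝ (Fin 3)) 1)) ∧
    IsCompact (TRealLocus g lam lam') := by
  classical
  set f : ℝ → ℝ := fun z => -∏ j : Fin (g + 1), ((z - lam j) * (z - lam' j)) with hfdef
  have hfc : Continuous f := by
    apply Continuous.neg
    apply continuous_finset_prod
    intro j _
    exact (continuous_id.sub continuous_const).mul (continuous_id.sub continuous_const)
  have hfa : ∀ i, f (lam i) = 0 := by
    intro i
    have h : ∏ j : Fin (g + 1), ((lam i - lam j) * (lam i - lam' j)) = 0 :=
      Finset.prod_eq_zero (Finset.mem_univ i) (by simp)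
    simp only [hfdef, h, neg_zero]
  have hfb : ∀ i, f (lam' i) = 0 := by
    intro i
    have h : ∏ j : Fin (g + 1), ((lam' i - lam j) * (lam' i - lam' j)) = 0 :=
      Finset.prod_eq_zero (Finset.mem_univ i) (by simp)
    simp only [hfdef, h, neg_zero]
  have hfpos : ∀ i, ∀ z ∈ Set.Ioo (lam i) (lam' i), 0 < f z := by
    intro i z hz
    have hprod : ∏ j : Fin (g + 1), ((z - lam j) * (z - lam' j)) < 0 := by
      rw [← Finset.mul_prod_erase Finset.univ _ (Finset.mem_univ i)]
      apply mul_neg_of_neg_of_pos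
      · exact mul_neg_of_pos_of_neg (by linarith [hz.1]) (by linarith [hz.2])
      · apply Finset.prod_pos
        intro j hj
        have hji : j ≠ i := Finset.ne_of_mem_erase hj
        rcases lt_or_gt_of_ne hji with h | h
        · have h1 : lam' j < lam i := hord2 j i h
          have h2 := hord1 j
          exact mul_pos (by linarith [hz.1]) (by linarith [hz.1])
        · have h1 : lam' i < lam j := hord2 i j h
          have h2 := hord1 j
          exact mul_pos_of_neg_of_neg (by linarith [hz.2]) (by linarith [hz.2])
    have : f z = -∏ j : Fin (g + 1), ((z - lam j) * (z - lam' j)) := rfl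
    rw [this]
    linarith
  have hTS : ∀ i, TRealSphere g lam lam' i = Stmt15.SS (lam i) (lam' i) f := by
    intro i
    ext p
    exact Iff.rfl
  have hmain := fun i =>
    Stmt15.main (hord1 i) (hfa i) (hfb i) hfc (hfpos i)
  have hcomp : ∀ i, IsCompact (TRealSphere g lam lam' i) := fun i => by
    rw [hTS i]; exact (hmain i).2.1
  have hconn : ∀ i, IsConnected (TRealSphere g lam lam' i) := fun i => by
    rw [hTS i]; exact (hmain i).2.2
  have hsub : ∀ p ∈ TRealLocus g lam lam', ∃ i, p ∈ TRealSphere g lam lam' i := by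
    intro p hp
    have hge : (0:ℝ) ≤ -∏ j : Fin (g + 1), ((p.1 - lam j) * (p.1 - lam' j)) := by
      rw [← hp]; exact Complex.normSq_nonneg _
    by_contra h
    push_neg at h
    have hpos' : ∀ j, 0 < (p.1 - lam j) * (p.1 - lam' j) := by
      intro j
      have hnot : p.1 ∉ Set.Icc (lam j) (lam' j) := fun hm => h j ⟨hp, hm⟩
      rw [Set.mem_Icc, not_and_or, not_le, not_le] at hnot
      rcases hnot with h' | h'
      · exact mul_pos_of_neg_of_neg (by linarith) (by linarith [hord1 j])
      · exact mul_pos (by linarith [hord1 j]) (by linarith)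
    have hP : 0 < ∏ j : Fin (g + 1), ((p.1 - lam j) * (p.1 - lam' j)) :=
      Finset.prod_pos fun j _ => hpos' j
    linarith
  have hunion : TRealLocus g lam lam' = ⋃ i, TRealSphere g lam lam' i := by
    ext p
    simp only [Set.mem_iUnion]
    constructor
    · exact hsub p
    · rintro ⟨i, hi⟩; exact hi.1
  have hdisj : ∀ i j, i ≠ j →
      Disjoint (TRealSphere g lam lam' i) (TRealSphere g lam lam' j) := by
    intro i j hij
    rw [Set.disjoint_left]
    intro p hpi hpj
    obtain ⟨-, hIi⟩ := hpi
    obtain ⟨-, hIj⟩ := hpj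
    rcases lt_or_gt_of_ne hij with h | h
    · have := hord2 i j h
      have h1 := hIi.2
      have h2 := hIj.1
      linarith
    · have := hord2 j i h
      have h1 := hIj.2
      have h2 := hIi.1
      linarith
  refine ⟨hunion, hdisj, ?_, ?_, ?_, ?_⟩
  · -- nonempty
    intro i
    set m : ℝ := (lam i + lam' i) / 2 with hmdef
    have hi := hord1 i
    have hm : m ∈ Set.Ioo (lam i) (lam' i) := by
      constructor <;> (rw [hmdef]; linarith)
    have hf0 : 0 < f m := hfpos i m hm
    refine ⟨(m, ((Real.sqrt (f m) : ℝ) : ℂ)), ⟨?_, ?_⟩⟩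
    · show Complex.normSq _ = -∏ j : Fin (g + 1), ((m - lam j) * (m - lam' j))
      rw [Complex.normSq_ofReal, Real.mul_self_sqrt (le_of_lt hf0)]
    · exact ⟨le_of_lt hm.1, le_of_lt hm.2⟩
  · -- connected components
    intro i p hp
    have hploc : p ∈ TRealLocus g lam lam' := hp.1
    set T := ⋃ j ∈ ({i}ᶜ : Set (Fin (g + 1))), TRealSphere g lam lam' j with hTdef
    have hTcomp : IsCompact T :=
      (Set.toFinite _).isCompact_biUnion fun j _ => hcomp j
    have hST : Disjoint (TRealSphere g lam lam' i) T := by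
      rw [Set.disjoint_left]
      intro q hq hqT
      simp only [hTdef, Set.mem_iUnion, Set.mem_compl_iff,
        Set.mem_singleton_iff] at hqT
      obtain ⟨j, hji, hqj⟩ := hqT
      exact (Set.disjoint_left.mp (hdisj i j (Ne.symm hji)) hq) hqj
    have hcover : TRealLocus g lam lam' = TRealSphere g lam lam' i ∪ T := by
      rw [hunion]
      apply Set.Subset.antisymm
      · intro q hq
        rw [Set.mem_iUnion] at hq
        obtain ⟨j, hj⟩ := hq
        by_cases hji : j = i
        · subst hji; exact Or.inl hj
        · refine Or.inr ?_
          simp only [hTdef, Set.mem_iUnion, Set.mem_compl_iff,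
            Set.mem_singleton_iff]
          exact ⟨j, hji, hj⟩
      · apply Set.union_subset
        · exact Set.subset_iUnion _ i
        · intro q hq
          simp only [hTdef, Set.mem_iUnion, Set.mem_compl_iff,
            Set.mem_singleton_iff] at hq
          obtain ⟨j, _, hqj⟩ := hq
          exact Set.mem_iUnion.mpr ⟨j, hqj⟩
    obtain ⟨U, V, hUo, hVo, hSU, hTV, hUV⟩ :=
      SeparatedNhds.of_isCompact_isCompact (hcomp i) hTcomp hST
    apply Set.Subset.antisymm
    · have hCsub : connectedComponentIn (TRealLocus g lam lam') p ⊆ U := by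
        apply IsPreconnected.subset_left_of_subset_union hUo hVo hUV
        · calc connectedComponentIn (TRealLocus g lam lam') p
              ⊆ TRealLocus g lam lam' := connectedComponentIn_subset _ _
            _ = TRealSphere g lam lam' i ∪ T := hcover
            _ ⊆ U ∪ V := Set.union_subset_union hSU hTV
        · exact ⟨p, mem_connectedComponentIn hploc, hSU hp⟩
        · exact isPreconnected_connectedComponentIn
      intro q hq
      have hqloc : q ∈ TRealLocus g lam lam' := connectedComponentIn_subset _ _ hq
      rw [hcover] at hqloc
      rcases hqloc with h | h
      · exact h
      · exact absurd (hCsub hq) fun hU => Set.disjoint_left.mp hUV hU (hTV h)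
    · exact (hconn i).isPreconnected.subset_connectedComponentIn hp
        (by rw [hcover]; exact Set.subset_union_left)
  · -- homeomorphisms
    intro i
    rw [hTS i]
    exact (hmain i).1
  · -- compactness
    rw [hunion]
    exact isCompact_iUnion fun i => hcomp i
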